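/- Let E and M₊ be n×n real matrices and define S₁(t) = Σ_{k=0}^∞ E^k t^{2k}/(2k)! and S₂(t) = Σ_{k=0}^∞ E^k t^{2k+1}/(2k+1)!. Then for every t ∈ ℝ the identity (S₁(t) − M₊·S₂(t))·(E·S₂(t) − S₁(t)·M₊) = (E·S₂(t) − M₊·S₁(t))·(S₁(t) − S₂(t)·M₊) holds. Consequently, whenever X(t) = S₁(t) − M₊·S₂(t) and S₁(t) − S₂(t)·M₊ are both invertible, X(t)⁻¹·X′(t) = (E·S₂(t) − S₁(t)·M₊)·(S₁(t) − S₂(t)·M₊)⁻¹. -/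

import Mathlib

open Matrix Finset
set_option maxHeartbeats 1000000


lemma my_sum_even_odd (h : ℕ → ℝ) (N : ℕ) :
    ∑ k ∈ Finset.range (2*N+1), h k
      = ∑ i ∈ Finset.range (N+1), h (2*i) + ∑ i ∈ Finset.range N, h (2*i+1) := by
  induction N with
  | zero => simp
  | succ N ih =>
      have e : 2*(N+1)+1 = (2*N+1)+1+1 := by ring
      rw [e, Finset.sum_range_succ, Finset.sum_range_succ, ih,
        Finset.sum_range_succ (fun i => h (2*i)) (N+1),
        Finset.sum_range_succ (fun i => h (2*i+1)) N]
      have e1 : 2*(N+1) = 2*N+1+1 := by ring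
      rw [e1]
      ring

lemma my_alt (m : ℕ) (hm : m ≠ 0) :
    ∑ k ∈ Finset.range (m+1), (-1:ℝ)^k / ((Nat.factorial k) * (Nat.factorial (m-k))) = 0 := by
  have h := Int.alternating_sum_range_choose (n := m)
  rw [if_neg hm] at h
  have h' : (∑ k ∈ Finset.range (m+1), (-1:ℝ)^k * (m.choose k)) = 0 := by
    have := congrArg (fun z : ℤ => (z : ℝ)) h
    push_cast at this
    simpa using this
  have hterm : ∀ k ∈ Finset.range (m+1),
      (-1:ℝ)^k / ((Nat.factorial k) * (Nat.factorial (m-k)))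
        = ((-1:ℝ)^k * (m.choose k)) / (Nat.factorial m) := by
    intro k hk
    rw [Finset.mem_range] at hk
    have hk' : k ≤ m := Nat.lt_succ_iff.mp hk
    rw [Nat.cast_choose ℝ hk']
    have h1 : (Nat.factorial k : ℝ) ≠ 0 := by positivity
    have h2 : (Nat.factorial (m-k) : ℝ) ≠ 0 := by positivity
    have h3 : (Nat.factorial m : ℝ) ≠ 0 := by positivity
    field_simp
  rw [Finset.sum_congr rfl hterm, ← Finset.sum_div, h', zero_div]

lemma my_key (n : ℕ) :
    ∑ p ∈ Finset.HasAntidiagonal.antidiagonal (n+1), (1:ℝ)/((Nat.factorial (2*p.1)) * (Nat.factorial (2*p.2)))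
      = ∑ p ∈ Finset.HasAntidiagonal.antidiagonal n, (1:ℝ)/((Nat.factorial (2*p.1+1)) * (Nat.factorial (2*p.2+1))) := by
  rw [Finset.Nat.sum_antidiagonal_eq_sum_range_succ_mk,
    Finset.Nat.sum_antidiagonal_eq_sum_range_succ_mk]
  set m := 2*n+2 with hm
  have halt := my_alt m (by omega)
  rw [show m + 1 = 2*(n+1)+1 by omega] at halt
  rw [my_sum_even_odd (fun k => (-1:ℝ)^k / ((Nat.factorial k) * (Nat.factorial (m-k)))) (n+1)] at halt
  have heven : ∀ i ∈ Finset.range (n+1+1),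
      (-1:ℝ)^(2*i) / ((Nat.factorial (2*i)) * (Nat.factorial (m-2*i)))
        = (1:ℝ)/((Nat.factorial (2*i)) * (Nat.factorial (2*(n+1-i)))) := by
    intro i hi
    rw [Finset.mem_range] at hi
    rw [pow_mul, neg_one_sq, one_pow, show m - 2*i = 2*(n+1-i) by omega]
  have hodd : ∀ i ∈ Finset.range (n+1),
      (-1:ℝ)^(2*i+1) / ((Nat.factorial (2*i+1)) * (Nat.factorial (m-(2*i+1))))
        = -((1:ℝ)/((Nat.factorial (2*i+1)) * (Nat.factorial (2*(n-i)+1)))) := by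
    intro i hi
    rw [Finset.mem_range] at hi
    rw [pow_succ, pow_mul, neg_one_sq, one_pow, one_mul,
      show m - (2*i+1) = 2*(n-i)+1 by omega]
    ring
  rw [Finset.sum_congr rfl heven, Finset.sum_congr rfl hodd] at halt
  rw [Finset.sum_neg_distrib] at halt
  linarith [halt]

section Aux
attribute [local instance] Matrix.linftyOpNormedRing Matrix.linftyOpNormedAlgebra

variable {n : ℕ} (hn : 0 < n) (E : Matrix (Fin n) (Fin n) ℝ) (t : ℝ)

local notation "A" => Matrix (Fin n) (Fin n) ℝ

lemma summable_f (hn : 0 < n) :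
    Summable fun k : ℕ => ‖(t ^ (2*k) / (Nat.factorial (2*k)) : ℝ) • E ^ k‖ := by
  haveI : Nonempty (Fin n) := ⟨⟨0, hn⟩⟩
  apply Summable.of_nonneg_of_le (fun k => norm_nonneg _)
    (f := fun k => (t^2 * ‖E‖)^k / (Nat.factorial k))
  · intro k
    rw [norm_smul]
    have h1 : ‖E ^ k‖ ≤ ‖E‖ ^ k := norm_pow_le E k
    have h2 : ‖(t ^ (2*k) / (Nat.factorial (2*k)) : ℝ)‖ = (t^2)^k / (Nat.factorial (2*k)) := by
      rw [Real.norm_eq_abs, abs_div, abs_of_nonneg (by positivity : (0:ℝ) ≤ (Nat.factorial (2*k) : ℝ)),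
        abs_pow, (even_two_mul k).pow_abs, pow_mul]
    rw [h2]
    calc (t^2)^k / (Nat.factorial (2*k)) * ‖E ^ k‖
        ≤ (t^2)^k / (Nat.factorial (2*k)) * ‖E‖^k := by
          apply mul_le_mul_of_nonneg_left h1 (by positivity)
      _ ≤ (t^2)^k / (Nat.factorial k) * ‖E‖^k := by
          apply mul_le_mul_of_nonneg_right _ (by positivity)
          apply div_le_div_of_nonneg_left (by positivity) (by positivity)
          exact_mod_cast Nat.factorial_le (by omega)
      _ = (t^2 * ‖E‖)^k / (Nat.factorial k) := by rw [mul_pow]; ring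
  · exact Real.summable_pow_div_factorial _

lemma summable_g (hn : 0 < n) :
    Summable fun k : ℕ => ‖(t ^ (2*k+1) / (Nat.factorial (2*k+1)) : ℝ) • E ^ k‖ := by
  haveI : Nonempty (Fin n) := ⟨⟨0, hn⟩⟩
  apply Summable.of_nonneg_of_le (fun k => norm_nonneg _)
    (f := fun k => |t| * ((t^2 * ‖E‖)^k / (Nat.factorial k)))
  · intro k
    rw [norm_smul]
    have h1 : ‖E ^ k‖ ≤ ‖E‖ ^ k := norm_pow_le E k
    have h2 : ‖(t ^ (2*k+1) / (Nat.factorial (2*k+1)) : ℝ)‖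
        = |t| * (t^2)^k / (Nat.factorial (2*k+1)) := by
      rw [Real.norm_eq_abs, abs_div,
        abs_of_nonneg (by positivity : (0:ℝ) ≤ (Nat.factorial (2*k+1) : ℝ)),
        pow_succ, pow_mul, abs_mul, abs_of_nonneg (by positivity : (0:ℝ) ≤ (t^2)^k)]
      ring
    rw [h2]
    calc |t| * (t^2)^k / (Nat.factorial (2*k+1)) * ‖E ^ k‖
        ≤ |t| * (t^2)^k / (Nat.factorial (2*k+1)) * ‖E‖^k := by
          apply mul_le_mul_of_nonneg_left h1 (by positivity)
      _ ≤ |t| * (t^2)^k / (Nat.factorial k) * ‖E‖^k := by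
          apply mul_le_mul_of_nonneg_right _ (by positivity)
          apply div_le_div_of_nonneg_left (by positivity) (by positivity)
          exact_mod_cast Nat.factorial_le (by omega)
      _ = |t| * ((t^2 * ‖E‖)^k / (Nat.factorial k)) := by rw [mul_pow]; ring
  · exact (Real.summable_pow_div_factorial _).mul_left _

lemma fg_elem_comm (a b : ℝ) (i j : ℕ) :
    (a • E ^ i) * (b • E ^ j) = (b • E ^ j) * (a • E ^ i) := by
  rw [smul_mul_smul_comm, smul_mul_smul_comm, pow_mul_comm, mul_comm a b]

-- general commutation of two norm-summable series with pointwise commuting terms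
lemma tsum_comm_of_comm (f g : ℕ → Matrix (Fin n) (Fin n) ℝ)
    (hf : Summable f) (hg : Summable g)
    (h : ∀ i j, f i * g j = g j * f i) :
    (∑' k, f k) * (∑' k, g k) = (∑' k, g k) * (∑' k, f k) :=
  calc (∑' k, f k) * (∑' k, g k) = ∑' j, (∑' k, f k) * g j := (hg.tsum_mul_left _).symm
    _ = ∑' j, g j * (∑' k, f k) := tsum_congr fun j => by
          rw [← hf.tsum_mul_right, ← hf.tsum_mul_left]
          exact tsum_congr fun i => h i j
    _ = (∑' k, g k) * (∑' k, f k) := hg.tsum_mul_right _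

lemma mul_comm_E (f : ℕ → ℝ) (hf : Summable fun k => (f k) • E ^ k) :
    E * (∑' k, (f k) • E ^ k) = (∑' k, (f k) • E ^ k) * E := by
  rw [← hf.tsum_mul_left, ← hf.tsum_mul_right]
  congr 1
  funext k
  rw [mul_smul_comm, smul_mul_assoc, ← pow_succ, ← pow_succ']

lemma pythagoras (hn : 0 < n) :
    (∑' k : ℕ, (t ^ (2*k) / (Nat.factorial (2*k)) : ℝ) • E ^ k)
      * (∑' k : ℕ, (t ^ (2*k) / (Nat.factorial (2*k)) : ℝ) • E ^ k)
    = 1 + E * ((∑' k : ℕ, (t ^ (2*k+1) / (Nat.factorial (2*k+1)) : ℝ) • E ^ k)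
      * (∑' k : ℕ, (t ^ (2*k+1) / (Nat.factorial (2*k+1)) : ℝ) • E ^ k)) := by
  haveI : Nonempty (Fin n) := ⟨⟨0, hn⟩⟩
  set f : ℕ → Matrix (Fin n) (Fin n) ℝ :=
    fun k => (t ^ (2*k) / (Nat.factorial (2*k)) : ℝ) • E ^ k with hfdef
  set g : ℕ → Matrix (Fin n) (Fin n) ℝ :=
    fun k => (t ^ (2*k+1) / (Nat.factorial (2*k+1)) : ℝ) • E ^ k with hgdef
  have hf : Summable fun k => ‖f k‖ := summable_f E t hn
  have hg : Summable fun k => ‖g k‖ := summable_g E t hn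
  -- the antidiagonal sums
  have hA : ∀ m : ℕ, ∑ p ∈ Finset.HasAntidiagonal.antidiagonal m, f p.1 * f p.2
      = ((∑ p ∈ Finset.HasAntidiagonal.antidiagonal m,
          (1:ℝ)/((Nat.factorial (2*p.1)) * (Nat.factorial (2*p.2)))) * t ^ (2*m)) • E ^ m := by
    intro m
    rw [Finset.sum_mul, Finset.sum_smul]
    apply Finset.sum_congr rfl
    intro p hp
    have hpm : p.1 + p.2 = m := Finset.HasAntidiagonal.mem_antidiagonal.mp hp
    subst hpm
    rw [hfdef]
    simp only
    rw [smul_mul_smul_comm, ← pow_add]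
    congr 1
    rw [show 2*(p.1+p.2) = 2*p.1 + 2*p.2 by ring, pow_add]
    field_simp
  have hB : ∀ m : ℕ, E * ∑ p ∈ Finset.HasAntidiagonal.antidiagonal m, g p.1 * g p.2
      = ((∑ p ∈ Finset.HasAntidiagonal.antidiagonal m,
          (1:ℝ)/((Nat.factorial (2*p.1+1)) * (Nat.factorial (2*p.2+1)))) * t ^ (2*(m+1))) • E ^ (m+1) := by
    intro m
    rw [Finset.mul_sum, Finset.sum_mul, Finset.sum_smul]
    apply Finset.sum_congr rfl
    intro p hp
    have hpm : p.1 + p.2 = m := Finset.HasAntidiagonal.mem_antidiagonal.mp hp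
    subst hpm
    rw [hgdef]
    simp only
    rw [smul_mul_smul_comm, ← pow_add, mul_smul_comm, ← pow_succ']
    congr 1
    rw [show 2*(p.1+p.2+1) = (2*p.1+1) + (2*p.2+1) by ring, pow_add]
    field_simp
    ring
  have hshift : ∀ m : ℕ, E * ∑ p ∈ Finset.HasAntidiagonal.antidiagonal m, g p.1 * g p.2
      = ∑ p ∈ Finset.HasAntidiagonal.antidiagonal (m+1), f p.1 * f p.2 := by
    intro m
    rw [hA (m+1), hB m, my_key m]
  -- Cauchy products
  have e1 : tsum f * tsum f = ∑' m, ∑ p ∈ Finset.HasAntidiagonal.antidiagonal m, f p.1 * f p.2 :=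
    tsum_mul_tsum_eq_tsum_sum_antidiagonal_of_summable_norm hf hf
  have e2 : tsum g * tsum g = ∑' m, ∑ p ∈ Finset.HasAntidiagonal.antidiagonal m, g p.1 * g p.2 :=
    tsum_mul_tsum_eq_tsum_sum_antidiagonal_of_summable_norm hg hg
  rw [e1, e2]
  have hsumF : Summable (fun m => ∑ p ∈ Finset.HasAntidiagonal.antidiagonal m, f p.1 * f p.2) :=
    (summable_norm_sum_mul_antidiagonal_of_summable_norm hf hf).of_norm
  have hsumG : Summable (fun m => ∑ p ∈ Finset.HasAntidiagonal.antidiagonal m, g p.1 * g p.2) :=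
    (summable_norm_sum_mul_antidiagonal_of_summable_norm hg hg).of_norm
  rw [← hsumG.tsum_mul_left]
  rw [hsumF.tsum_eq_zero_add]
  congr 1
  · simp [hfdef]
  · exact (tsum_congr fun m => (hshift m).symm)

lemma main_identity (hn : 0 < n) (Mp : Matrix (Fin n) (Fin n) ℝ) :
    ((∑' k : ℕ, (t ^ (2 * k) / (Nat.factorial (2 * k)) : ℝ) • E ^ k)
        - Mp * (∑' k : ℕ, (t ^ (2 * k + 1) / (Nat.factorial (2 * k + 1)) : ℝ) • E ^ k))
      * (E * (∑' k : ℕ, (t ^ (2 * k + 1) / (Nat.factorial (2 * k + 1)) : ℝ) • E ^ k)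
        - (∑' k : ℕ, (t ^ (2 * k) / (Nat.factorial (2 * k)) : ℝ) • E ^ k) * Mp)
    = (E * (∑' k : ℕ, (t ^ (2 * k + 1) / (Nat.factorial (2 * k + 1)) : ℝ) • E ^ k)
        - Mp * (∑' k : ℕ, (t ^ (2 * k) / (Nat.factorial (2 * k)) : ℝ) • E ^ k))
      * ((∑' k : ℕ, (t ^ (2 * k) / (Nat.factorial (2 * k)) : ℝ) • E ^ k)
        - (∑' k : ℕ, (t ^ (2 * k + 1) / (Nat.factorial (2 * k + 1)) : ℝ) • E ^ k) * Mp) := by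
  set P : Matrix (Fin n) (Fin n) ℝ :=
    ∑' k : ℕ, (t ^ (2 * k) / (Nat.factorial (2 * k)) : ℝ) • E ^ k with hP
  set Q : Matrix (Fin n) (Fin n) ℝ :=
    ∑' k : ℕ, (t ^ (2 * k + 1) / (Nat.factorial (2 * k + 1)) : ℝ) • E ^ k with hQ
  have hfn := summable_f E t hn
  have hgn := summable_g E t hn
  have hf : Summable (fun k : ℕ => (t ^ (2 * k) / (Nat.factorial (2 * k)) : ℝ) • E ^ k) :=
    hfn.of_norm
  have hg : Summable (fun k : ℕ => (t ^ (2 * k + 1) / (Nat.factorial (2 * k + 1)) : ℝ) • E ^ k) :=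
    hgn.of_norm
  have hEP : E * P = P * E := mul_comm_E E _ hf
  have hEQ : E * Q = Q * E := mul_comm_E E _ hg
  have hPQ : P * Q = Q * P := tsum_comm_of_comm _ _ hf hg (fun i j => fg_elem_comm E _ _ i j)
  have hpy : P * P = 1 + E * (Q * Q) := pythagoras E t hn
  have hPC : P * (E * Q) = (E * Q) * P := by
    rw [← mul_assoc, ← hEP, mul_assoc, hPQ, ← mul_assoc]
  have hQC : Q * (E * Q) = (E * Q) * Q := by
    rw [← mul_assoc, ← hEQ, mul_assoc]
  have hpy' : P * P = 1 + (E * Q) * Q := by rw [hpy, ← mul_assoc]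
  calc (P - Mp * Q) * (E * Q - P * Mp)
      = P * (E * Q) - (P * P) * Mp - Mp * (Q * (E * Q)) + Mp * ((Q * P) * Mp) := by
        noncomm_ring
    _ = (E * Q) * P - (1 + (E * Q) * Q) * Mp - Mp * ((E * Q) * Q) + Mp * ((P * Q) * Mp) := by
        rw [hPC, hQC, hpy', hPQ]
    _ = (E * Q) * P - (E * Q) * (Q * Mp) - Mp * (1 + (E * Q) * Q) + Mp * ((P * Q) * Mp) := by
        noncomm_ring
    _ = (E * Q) * P - (E * Q) * (Q * Mp) - Mp * (P * P) + Mp * ((P * Q) * Mp) := by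
        rw [hpy']
    _ = (E * Q - Mp * P) * (P - Q * Mp) := by noncomm_ring
end Aux

lemma inv_shuffle {n : ℕ} (X Y Z W : Matrix (Fin n) (Fin n) ℝ)
    (h : X * Z = W * Y) (hX : IsUnit X) (hY : IsUnit Y) :
    X⁻¹ * W = Z * Y⁻¹ := by
  have hX' := Matrix.nonsing_inv_mul X ((Matrix.isUnit_iff_isUnit_det X).mp hX)
  have hY' := Matrix.mul_nonsing_inv Y ((Matrix.isUnit_iff_isUnit_det Y).mp hY)
  calc X⁻¹ * W = X⁻¹ * W * (Y * Y⁻¹) := by rw [hY', mul_one]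
    _ = X⁻¹ * (W * Y) * Y⁻¹ := by noncomm_ring
    _ = X⁻¹ * (X * Z) * Y⁻¹ := by rw [h]
    _ = (X⁻¹ * X) * (Z * Y⁻¹) := by noncomm_ring
    _ = Z * Y⁻¹ := by rw [hX', one_mul]

/-- For `n×n` real matrices `E` and `M₊` and the matrix series
`S₁(t) = Σ E^k t^(2k)/(2k)!`, `S₂(t) = Σ E^k t^(2k+1)/(2k+1)!`, one has
`(S₁ - M₊S₂)(E S₂ - S₁ M₊) = (E S₂ - M₊ S₁)(S₁ - S₂ M₊)`; consequently, whenever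
`X = S₁ - M₊ S₂` and `S₁ - S₂ M₊` are invertible,
`X⁻¹ X' = (E S₂ - S₁ M₊)(S₁ - S₂ M₊)⁻¹`, where `X' = E S₂ - M₊ S₁`. -/
theorem riccati_solution_commutation
    (n : ℕ) (E Mp : Matrix (Fin n) (Fin n) ℝ) (t : ℝ) :
    let S₁ := ∑' k : ℕ, (t ^ (2 * k) / (Nat.factorial (2 * k)) : ℝ) • E ^ k
    let S₂ := ∑' k : ℕ, (t ^ (2 * k + 1) / (Nat.factorial (2 * k + 1)) : ℝ) • E ^ k
    (S₁ - Mp * S₂) * (E * S₂ - S₁ * Mp) = (E * S₂ - Mp * S₁) * (S₁ - S₂ * Mp) ∧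
    (IsUnit (S₁ - Mp * S₂) → IsUnit (S₁ - S₂ * Mp) →
      (S₁ - Mp * S₂)⁻¹ * (E * S₂ - Mp * S₁)
        = (E * S₂ - S₁ * Mp) * (S₁ - S₂ * Mp)⁻¹) := by
  intro S₁ S₂
  rcases Nat.eq_zero_or_pos n with hn | hn
  · subst hn
    constructor
    · ext i j; exact i.elim0
    · intro _ _; ext i j; exact i.elim0
  · have hid := main_identity E t hn Mp
    exact ⟨hid, fun hX hY => inv_shuffle _ _ _ _ hid hX hY⟩
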